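/- For every integer k ≥ 2, the series Σ_{n=1}^∞ (log k − (H_{kn} − H_n))/n converges and its sum equals −∫₀¹ (Q_k′(t)/Q_k(t))·log(1−t^k) dt, where Q_k(t) = 1 + t + ⋯ + t^{k−1}. -/

import Mathlib

open Filter Topology intervalIntegral

/-- The `n`-th harmonic number `Hₙ = Σ_{j=1}^n 1/j`. -/
noncomputable def H (n : ℕ) : ℝ := ∑ j ∈ Finset.range n, 1 / ((j : ℝ) + 1)

/-- The polynomial `Q_k(t) = 1 + t + ⋯ + t^{k−1}`. -/
noncomputable def Q (k : ℕ) : ℝ → ℝ := fun t => ∑ i ∈ Finset.range k, t ^ i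

lemma hasDerivAt_Q (k : ℕ) (t : ℝ) :
    HasDerivAt (Q k) (∑ i ∈ Finset.range k, (i : ℝ) * t ^ (i - 1)) t := by
  unfold Q
  exact HasDerivAt.fun_sum fun i _ => hasDerivAt_pow i t

lemma deriv_Q (k : ℕ) (t : ℝ) :
    deriv (Q k) t = ∑ i ∈ Finset.range k, (i : ℝ) * t ^ (i - 1) := (hasDerivAt_Q k t).deriv

lemma continuous_derivQ (k : ℕ) : Continuous (deriv (Q k)) := by
  have : deriv (Q k) = fun t => ∑ i ∈ Finset.range k, (i : ℝ) * t ^ (i - 1) :=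
    funext fun t => deriv_Q k t
  rw [this]
  exact continuous_finset_sum _ fun i _ => continuous_const.mul (continuous_pow _)

lemma continuous_Q (k : ℕ) : Continuous (Q k) :=
  continuous_finset_sum _ fun i _ => continuous_pow _

lemma Q_pos (k : ℕ) (hk : 1 ≤ k) {t : ℝ} (ht : 0 ≤ t) : 0 < Q k t := by
  have h1 : (1 : ℝ) ≤ Q k t := by
    have := Finset.single_le_sum (f := fun i => t ^ i)
      (fun i _ => pow_nonneg ht i) (Finset.mem_range.2 hk)
    simpa [Q] using this
  linarith

lemma Q_zero (k : ℕ) (hk : 1 ≤ k) : Q k 0 = 1 := by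
  unfold Q
  rw [Finset.sum_eq_single 0]
  · simp
  · intro b _ hb; exact zero_pow hb
  · intro h; exact absurd (Finset.mem_range.2 hk) h

lemma Q_one (k : ℕ) : Q k 1 = k := by simp [Q]

lemma geom_Q (k : ℕ) (t : ℝ) : (t - 1) * Q k t = t ^ k - 1 := by
  unfold Q
  rw [mul_comm]
  exact geom_sum_mul t k

lemma contOn_g (k : ℕ) (hk : 1 ≤ k) :
    ContinuousOn (fun t => deriv (Q k) t / Q k t) {t : ℝ | 0 ≤ t} := by
  apply ContinuousOn.div (continuous_derivQ k).continuousOn (continuous_Q k).continuousOn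
  intro t ht
  exact (Q_pos k hk ht).ne'

lemma intInt_g (k : ℕ) (hk : 1 ≤ k) :
    IntervalIntegrable (fun t => deriv (Q k) t / Q k t) MeasureTheory.volume 0 1 := by
  apply ContinuousOn.intervalIntegrable
  apply (contOn_g k hk).mono
  rw [Set.uIcc_of_le (by norm_num : (0:ℝ) ≤ 1)]
  intro t ht
  exact ht.1

lemma integral_g (k : ℕ) (hk : 1 ≤ k) :
    ∫ t in (0:ℝ)..1, deriv (Q k) t / Q k t = Real.log k := by
  rw [intervalIntegral.integral_eq_sub_of_hasDerivAt (f := fun t => Real.log (Q k t))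
      (fun t ht => ?_) (intInt_g k hk)]
  · rw [Q_one, Q_zero k hk, Real.log_one, sub_zero]
  · rw [Set.uIcc_of_le (by norm_num : (0:ℝ) ≤ 1)] at ht
    have h := (hasDerivAt_Q k t).log (Q_pos k hk ht.1).ne'
    rw [deriv_Q]
    exact h

lemma Hdiff (a b : ℕ) : H (a + b) - H a = ∑ i ∈ Finset.range b, 1 / ((a : ℝ) + i + 1) := by
  induction b with
  | zero => simp
  | succ b ih =>
    rw [Finset.sum_range_succ, ← ih]
    have : H (a + (b + 1)) = H (a + b) + 1 / ((a : ℝ) + b + 1) := by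
      show H (a + b + 1) = _
      unfold H
      rw [Finset.sum_range_succ]
      push_cast
      ring
    rw [this]; ring

lemma sum_tele (m n : ℕ) (hm : 1 ≤ m) :
    ∑ i ∈ Finset.range m,
      ((i : ℝ) + 1) * (1 / (((m:ℝ)+1) * n + i + 2) - 1 / (((m:ℝ)+1) * n + i + 1))
      = 1 / ((n : ℝ) + 1) - ∑ i ∈ Finset.range (m + 1), 1 / (((m:ℝ)+1) * n + i + 1) := by
  set c : ℝ := ((m:ℝ)+1) * n with hc
  have hc0 : 0 ≤ c := by positivity
  have tele := Finset.sum_range_sub (fun i => (i : ℝ) / (c + i + 1)) m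
  have hterm : ∀ i ∈ Finset.range m,
      ((i : ℝ) + 1) * (1 / (c + i + 2) - 1 / (c + i + 1))
      = (((i:ℕ)+1 : ℕ) : ℝ) / (c + ((i:ℕ)+1 : ℕ) + 1) - (i : ℝ) / (c + i + 1)
        - 1 / (c + i + 1) := by
    intro i _
    have h1 : c + i + 1 ≠ 0 := by positivity
    have h2 : c + i + 2 ≠ 0 := by positivity
    push_cast
    field_simp
    ring
  rw [Finset.sum_congr rfl hterm, Finset.sum_sub_distrib, tele, Finset.sum_range_succ]
  have h3 : c + m + 1 ≠ 0 := by positivity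
  have h4 : (n : ℝ) + 1 ≠ 0 := by positivity
  have key : (m : ℝ) / (c + m + 1) + 1 / (c + m + 1) = 1 / ((n:ℝ) + 1) := by
    rw [← add_div, hc]
    field_simp
    ring
  push_cast
  simp only [zero_div]
  linarith [key]

lemma step_int (k : ℕ) (hk : 2 ≤ k) (n : ℕ) :
    ∫ t in (0:ℝ)..1, (t - 1) * ((t ^ k) ^ n * deriv (Q k) t)
      = 1 / ((n : ℝ) + 1) - (H (k * n + k) - H (k * n)) := by
  obtain ⟨m, rfl⟩ : ∃ m, k = m + 1 := ⟨k - 1, (Nat.succ_pred_eq_of_pos (by omega)).symm⟩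
  have hm : 1 ≤ m := by omega
  set k := m + 1 with hkdef
  have hfun : (fun t : ℝ => (t - 1) * ((t ^ k) ^ n * deriv (Q k) t))
      = fun t : ℝ => ∑ i ∈ Finset.range m,
          ((i : ℝ) + 1) * (t ^ (k * n + i + 1) - t ^ (k * n + i)) := by
    funext t
    rw [deriv_Q, Finset.sum_range_succ']
    simp only [Nat.cast_zero, zero_mul, add_zero, Nat.add_sub_cancel, Nat.cast_add,
      Nat.cast_one]
    rw [Finset.mul_sum, Finset.mul_sum]
    refine Finset.sum_congr rfl fun i _ => ?_
    rw [pow_add t (k * n + i) 1, pow_add t (k * n) i, ← pow_mul]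
    ring
  rw [hfun]
  rw [intervalIntegral.integral_finset_sum (f := fun (i : ℕ) (t : ℝ) => ((i : ℝ) + 1) * (t ^ (k * n + i + 1) - t ^ (k * n + i))) (fun i _ => ((continuous_const.mul
    ((continuous_pow _).sub (continuous_pow _))).intervalIntegrable 0 1))]
  have hint : ∀ i ∈ Finset.range m,
      ∫ t in (0:ℝ)..1, ((i : ℝ) + 1) * (t ^ (k * n + i + 1) - t ^ (k * n + i))
      = ((i : ℝ) + 1) * (1 / (((m:ℝ)+1) * n + i + 2) - 1 / (((m:ℝ)+1) * n + i + 1)) := by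
    intro i _
    rw [intervalIntegral.integral_const_mul,
      intervalIntegral.integral_sub ((intervalIntegral.intervalIntegrable_pow _))
        ((intervalIntegral.intervalIntegrable_pow _)),
      integral_pow, integral_pow]
    push_cast [hkdef]
    ring
  rw [Finset.sum_congr rfl hint, sum_tele m n hm]
  have hH : H (k * n + k) - H (k * n)
      = ∑ i ∈ Finset.range (m + 1), 1 / (((m:ℝ)+1) * n + i + 1) := by
    rw [Hdiff (k * n) k]
    refine Finset.sum_congr rfl fun i _ => ?_
    push_cast [hkdef]
    ring_nf
  rw [hH]

lemma H_zero : H 0 = 0 := by unfold H; simp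

lemma H_succ (n : ℕ) : H (n + 1) = H n + 1 / ((n : ℝ) + 1) := by
  unfold H; rw [Finset.sum_range_succ]

lemma poly_int (k : ℕ) (hk : 2 ≤ k) (n : ℕ) :
    ∫ t in (0:ℝ)..1, (t - 1) * ((∑ j ∈ Finset.range n, (t ^ k) ^ j) * deriv (Q k) t)
      = H n - H (k * n) := by
  induction n with
  | zero => simp [H_zero]
  | succ n ih =>
    have hfun : (fun t : ℝ => (t - 1) * ((∑ j ∈ Finset.range (n+1), (t ^ k) ^ j) * deriv (Q k) t))
        = fun t : ℝ => (t - 1) * ((∑ j ∈ Finset.range n, (t ^ k) ^ j) * deriv (Q k) t)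
          + (t - 1) * ((t ^ k) ^ n * deriv (Q k) t) := by
      funext t
      rw [Finset.sum_range_succ]
      ring
    rw [hfun, intervalIntegral.integral_add ?_ ?_, ih, step_int k hk n]
    · rw [H_succ n]
      have : k * (n + 1) = k * n + k := by ring
      rw [this]
      ring
    · exact (((continuous_id.sub continuous_const).mul
        ((continuous_finset_sum _ fun j _ => (continuous_pow k).pow j).mul
          (continuous_derivQ k))).intervalIntegrable 0 1)
    · exact (((continuous_id.sub continuous_const).mul
        (((continuous_pow k).pow n).mul (continuous_derivQ k))).intervalIntegrable 0 1)

lemma key (k : ℕ) (hk : 2 ≤ k) (n : ℕ) :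
    ∫ t in (0:ℝ)..1, t ^ (k * n) * (deriv (Q k) t / Q k t)
      = Real.log k + (H n - H (k * n)) := by
  have hk1 : 1 ≤ k := by omega
  have hfun : Set.EqOn (fun t : ℝ => t ^ (k * n) * (deriv (Q k) t / Q k t))
      (fun t : ℝ => deriv (Q k) t / Q k t
        + (t - 1) * ((∑ j ∈ Finset.range n, (t ^ k) ^ j) * deriv (Q k) t))
      (Set.uIcc (0:ℝ) 1) := by
    intro t ht
    rw [Set.uIcc_of_le (by norm_num : (0:ℝ) ≤ 1)] at ht
    have hQ : Q k t ≠ 0 := (Q_pos k hk1 ht.1).ne'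
    have e1 : (t - 1) * Q k t = t ^ k - 1 := geom_Q k t
    have e2 : (∑ j ∈ Finset.range n, (t ^ k) ^ j) * (t ^ k - 1) = (t ^ k) ^ n - 1 :=
      geom_sum_mul (t ^ k) n
    have e3 : t ^ (k * n) - 1
        = (t - 1) * (Q k t * ∑ j ∈ Finset.range n, (t ^ k) ^ j) := by
      rw [pow_mul, ← e2, ← e1]; ring
    show t ^ (k * n) * (deriv (Q k) t / Q k t) = _
    field_simp
    linear_combination deriv (Q k) t * e3
  rw [intervalIntegral.integral_congr hfun,
    intervalIntegral.integral_add (g := fun t : ℝ => (t - 1) * ((∑ j ∈ Finset.range n, (t ^ k) ^ j) * deriv (Q k) t)) (intInt_g k hk1)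
      (((continuous_id'.sub continuous_const).mul
        ((continuous_finset_sum _ fun j _ => (continuous_pow k).pow j).mul
          (continuous_derivQ k))).intervalIntegrable 0 1),
    integral_g k hk1, poly_int k hk n]

lemma partial_sum (k : ℕ) (hk : 2 ≤ k) (m : ℕ) :
    ∑ n ∈ Finset.range m, (Real.log k - (H (k * (n + 1)) - H (n + 1))) / ((n : ℝ) + 1)
      = ∫ t in (0:ℝ)..1,
          (∑ n ∈ Finset.range m, t ^ (k * (n + 1)) / ((n : ℝ) + 1))
            * (deriv (Q k) t / Q k t) := by
  have hk1 : 1 ≤ k := by omega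
  have hco : ∀ n : ℕ, ContinuousOn
      (fun t : ℝ => t ^ (k * (n + 1)) / ((n : ℝ) + 1) * (deriv (Q k) t / Q k t))
      (Set.uIcc (0:ℝ) 1) := by
    intro n
    apply ContinuousOn.mul ((continuous_pow _).div_const _).continuousOn
    apply (contOn_g k hk1).mono
    rw [Set.uIcc_of_le (by norm_num : (0:ℝ) ≤ 1)]
    exact fun t ht => ht.1
  have hfun : (fun t : ℝ => (∑ n ∈ Finset.range m, t ^ (k * (n + 1)) / ((n : ℝ) + 1))
      * (deriv (Q k) t / Q k t))
      = fun t : ℝ => ∑ n ∈ Finset.range m,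
          t ^ (k * (n + 1)) / ((n : ℝ) + 1) * (deriv (Q k) t / Q k t) := by
    funext t
    rw [Finset.sum_mul]
  rw [hfun, intervalIntegral.integral_finset_sum
    (fun n _ => (hco n).intervalIntegrable)]
  refine Finset.sum_congr rfl fun n _ => ?_
  have h2 : (fun t : ℝ => t ^ (k * (n + 1)) / ((n : ℝ) + 1) * (deriv (Q k) t / Q k t))
      = fun t : ℝ => t ^ (k * (n + 1)) * (deriv (Q k) t / Q k t) / ((n : ℝ) + 1) := by
    funext t; ring
  rw [h2, intervalIntegral.integral_div, key k hk (n + 1)]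
  ring

/-- For `k ≥ 2`, the series `Σ_{n=1}^∞ (log k − (H_{kn} − H_n))/n` converges, with sum
`−∫₀¹ (Q_k′(t)/Q_k(t))·log(1−t^k) dt`. -/
theorem stmt_12 (k : ℕ) (hk : 2 ≤ k) :
    Tendsto (fun m => ∑ n ∈ Finset.range m,
        (Real.log k - (H (k * (n + 1)) - H (n + 1))) / (n + 1))
      atTop
      (𝓝 (-∫ t in (0:ℝ)..1, (deriv (Q k) t / Q k t) * Real.log (1 - t ^ k))) := by
  have hk1 : 1 ≤ k := by omega
  set g : ℝ → ℝ := fun t => deriv (Q k) t / Q k t with hg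
  -- bound on g
  obtain ⟨C, hC⟩ : ∃ C, ∀ x ∈ Set.Icc (0:ℝ) 1, ‖g x‖ ≤ C :=
    isCompact_Icc.exists_bound_of_continuousOn
      ((contOn_g k hk1).mono (fun t ht => ht.1))
  have hC0 : 0 ≤ C := le_trans (norm_nonneg _) (hC 0 (by norm_num))
  -- rewrite partial sums as integrals
  rw [Filter.tendsto_congr (partial_sum k hk)]
  -- rewrite the limit point
  have hpt : (-∫ t in (0:ℝ)..1, g t * Real.log (1 - t ^ k))
      = ∫ t in (0:ℝ)..1, -Real.log (1 - t ^ k) * g t := by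
    rw [← intervalIntegral.integral_neg]
    congr 1; funext t; ring
  rw [hpt]
  -- a.e. x ≠ 1
  have hae : ∀ᵐ x : ℝ ∂MeasureTheory.volume, x ≠ (1:ℝ) := by
    refine MeasureTheory.ae_iff.2 ?_
    simpa using Real.volume_singleton (a := 1)
  -- dominated convergence
  apply intervalIntegral.tendsto_integral_filter_of_dominated_convergence
    (bound := fun t => C * 2 * (1 - t) ^ (-(1/2) : ℝ))
  · -- measurability
    refine Filter.Eventually.of_forall fun m => ?_
    refine ContinuousOn.aestronglyMeasurable ?_ measurableSet_uIoc
    have hsub : Set.uIoc (0:ℝ) 1 ⊆ {t : ℝ | 0 ≤ t} := by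
      rw [Set.uIoc_of_le (by norm_num : (0:ℝ) ≤ 1)]
      exact fun t ht => ht.1.le
    exact ContinuousOn.mul
      (continuous_finset_sum _ fun n _ => (continuous_pow _).div_const _).continuousOn
      ((contOn_g k hk1).mono hsub)
  · -- bound
    refine Filter.Eventually.of_forall fun m => ?_
    filter_upwards [hae] with x hx1 hxI
    rw [Set.uIoc_of_le (by norm_num : (0:ℝ) ≤ 1)] at hxI
    have hx0 : 0 < x := hxI.1
    have hxlt : x < 1 := lt_of_le_of_ne hxI.2 hx1
    have hxk : x ^ k < 1 := pow_lt_one₀ hx0.le hxlt (by omega)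
    have hxk0 : (0:ℝ) ≤ x ^ k := pow_nonneg hx0.le k
    have hsum : HasSum (fun n : ℕ => (x ^ k) ^ (n + 1) / (n + 1))
        (-Real.log (1 - x ^ k)) :=
      Real.hasSum_pow_div_log_of_abs_lt_one (by rw [abs_of_nonneg hxk0]; exact hxk)
    have hterm : ∀ n : ℕ, x ^ (k * (n + 1)) / ((n:ℝ) + 1)
        = (x ^ k) ^ (n + 1) / ((n:ℝ) + 1) := by
      intro n; rw [pow_mul]
    have hnn : ∀ n : ℕ, (0:ℝ) ≤ (x ^ k) ^ (n + 1) / ((n:ℝ) + 1) := by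
      intro n; positivity
    have hS : ∑ n ∈ Finset.range m, x ^ (k * (n + 1)) / ((n:ℝ) + 1)
        ≤ -Real.log (1 - x ^ k) := by
      rw [Finset.sum_congr rfl fun n _ => hterm n]
      exact sum_le_hasSum _ (fun n _ => hnn n) hsum
    have hS0 : (0:ℝ) ≤ ∑ n ∈ Finset.range m, x ^ (k * (n + 1)) / ((n:ℝ) + 1) :=
      Finset.sum_nonneg fun n _ => by positivity
    -- log bound
    have h1x : (0:ℝ) < 1 - x := by linarith
    have hu : (0:ℝ) < 1 - x ^ k := by linarith
    have hxx : x ^ k ≤ x := by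
      simpa using pow_le_pow_of_le_one hx0.le hxlt.le (by omega : 1 ≤ k)
    have hle : 1 - x ≤ 1 - x ^ k := by linarith
    have hsq : (0:ℝ) < Real.sqrt (1 - x) := Real.sqrt_pos.2 h1x
    have hsqu : (0:ℝ) < Real.sqrt (1 - x ^ k) := Real.sqrt_pos.2 hu
    have hlog : -Real.log (1 - x ^ k) ≤ 2 * (1 - x) ^ (-(1/2) : ℝ) := by
      have e1 : -Real.log (1 - x ^ k) = 2 * (-Real.log (Real.sqrt (1 - x ^ k))) := by
        rw [Real.log_sqrt hu.le]; ring
      have e2 : -Real.log (Real.sqrt (1 - x ^ k)) ≤ (Real.sqrt (1 - x ^ k))⁻¹ := by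
        have := Real.log_le_sub_one_of_pos (inv_pos.2 hsqu)
        rw [Real.log_inv] at this
        linarith
      have e3 : (Real.sqrt (1 - x ^ k))⁻¹ ≤ (Real.sqrt (1 - x))⁻¹ :=
        inv_anti₀ hsq (Real.sqrt_le_sqrt hle)
      have e4 : (Real.sqrt (1 - x))⁻¹ = (1 - x) ^ (-(1/2) : ℝ) := by
        rw [Real.sqrt_eq_rpow, ← Real.rpow_neg_one ((1-x) ^ (1/2:ℝ)),
          ← Real.rpow_mul h1x.le]
        norm_num
      rw [e1]
      calc 2 * (-Real.log (Real.sqrt (1 - x ^ k)))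
          ≤ 2 * (Real.sqrt (1 - x ^ k))⁻¹ := by linarith
        _ ≤ 2 * (Real.sqrt (1 - x))⁻¹ := by linarith
        _ = 2 * (1 - x) ^ (-(1/2) : ℝ) := by rw [e4]
    calc ‖(∑ n ∈ Finset.range m, x ^ (k * (n + 1)) / ((n:ℝ) + 1)) * g x‖
        = (∑ n ∈ Finset.range m, x ^ (k * (n + 1)) / ((n:ℝ) + 1)) * ‖g x‖ := by
          rw [norm_mul, Real.norm_of_nonneg hS0]
      _ ≤ (2 * (1 - x) ^ (-(1/2) : ℝ)) * C :=
          mul_le_mul (hS.trans hlog) (hC x ⟨hx0.le, hxI.2⟩) (norm_nonneg _)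
            (by positivity)
      _ = C * 2 * (1 - x) ^ (-(1/2) : ℝ) := by ring
  · -- bound integrable
    have h1 : IntervalIntegrable (fun t : ℝ => t ^ (-(1/2) : ℝ))
        MeasureTheory.volume 0 1 := intervalIntegral.intervalIntegrable_rpow' (by norm_num)
    have h2 := (h1.comp_sub_left 1).symm
    simp only [sub_zero, sub_self] at h2
    exact h2.const_mul (C * 2)
  · -- pointwise convergence
    filter_upwards [hae] with x hx1 hxI
    rw [Set.uIoc_of_le (by norm_num : (0:ℝ) ≤ 1)] at hxI
    have hx0 : 0 < x := hxI.1
    have hxlt : x < 1 := lt_of_le_of_ne hxI.2 hx1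
    have hxk : x ^ k < 1 := pow_lt_one₀ hx0.le hxlt (by omega)
    have hxk0 : (0:ℝ) ≤ x ^ k := pow_nonneg hx0.le k
    have hsum : HasSum (fun n : ℕ => (x ^ k) ^ (n + 1) / (n + 1))
        (-Real.log (1 - x ^ k)) :=
      Real.hasSum_pow_div_log_of_abs_lt_one (by rw [abs_of_nonneg hxk0]; exact hxk)
    have ht := hsum.tendsto_sum_nat.mul_const (g x)
    refine ht.congr fun m => ?_
    congr 1
    exact Finset.sum_congr rfl fun n _ => by rw [pow_mul]
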